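/- Let ε_1,…,ε_n be i.i.d. random variables satisfying (F1) and let (h_n) satisfy (H1). Then for any fixed finite collection I_1,…,I_m of disjoint non-degenerate subintervals of [−1,1], sup_{x ∈ [h_n, 1−h_n]} max_{1 ≤ j ≤ m} min{ −ε_i : i ∈ {1,…,n}, (i/n − x)/h_n ∈ I_j } = O_P( (|log h_n|/(n h_n))^{1/α} ). -/

import Mathlib

open MeasureTheory Filter Set Polynomial ProbabilityTheory

noncomputable section

/-- (G1) with explicit Hölder constant `C`. -/
def HolderClassWith (g : ℝ → ℝ) (β C : ℝ) : Prop :=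
  ContDiffOn ℝ (⌊β⌋₊ : ℕ) g (Set.Icc 0 1) ∧
  ∀ t ∈ Set.Icc (0:ℝ) 1, ∀ x ∈ Set.Icc (0:ℝ) 1,
    |iteratedDerivWithin ⌊β⌋₊ g (Set.Icc 0 1) t - iteratedDerivWithin ⌊β⌋₊ g (Set.Icc 0 1) x|
      ≤ C * |t - x| ^ (β - ⌊β⌋₊)

/-- (G1): Hölder class of order β on [0,1]. -/
def HolderClass (g : ℝ → ℝ) (β : ℝ) : Prop := ∃ C : ℝ, HolderClassWith g β C

/-- `ghat` is a boundary estimator with data `Y`, bandwidth `hn` and smoothness `β`: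
at each `x ∈ [0,1]`, `ghat x = p x` for a polynomial of degree `⌈β⌉ − 1` minimizing the
local integral `∫_{x−hn}^{x+hn} p` subject to lying above all data points `(j/n, Y j)`
with `|j/n − x| ≤ hn`. -/
def IsBoundaryEst (β : ℝ) (n : ℕ) (hn : ℝ) (Y : ℕ → ℝ) (ghat : ℝ → ℝ) : Prop :=
  ∀ x ∈ Set.Icc (0:ℝ) 1, ∃ p : Polynomial ℝ,
    p.natDegree ≤ ⌈β⌉₊ - 1 ∧
    (∀ j ∈ Finset.Icc 1 n, |(j:ℝ)/n - x| ≤ hn → Y j ≤ p.eval ((j:ℝ)/n)) ∧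
    (∀ q : Polynomial ℝ, q.natDegree ≤ ⌈β⌉₊ - 1 →
      (∀ j ∈ Finset.Icc 1 n, |(j:ℝ)/n - x| ≤ hn → Y j ≤ q.eval ((j:ℝ)/n)) →
      (∫ t in (x - hn)..(x + hn), p.eval t) ≤ ∫ t in (x - hn)..(x + hn), q.eval t) ∧
    ghat x = p.eval x

/-- i.i.d. errors with common cdf `F`. -/
def IIDWithCDF {Ω : Type*} [MeasurableSpace Ω] (μ : Measure Ω) (ε : ℕ → Ω → ℝ)
    (F : ℝ → ℝ) : Prop :=
  (∀ i, Measurable (ε i)) ∧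
  iIndepFun ε μ ∧
  ∀ i y, μ {ω | ε i ω ≤ y} = ENNReal.ofReal (F y)

/-- (F1): errors supported on (−∞,0] and F(y) = 1 − c|y|^α + o(|y|^α) as y ↑ 0. -/
def ErrF1 (F : ℝ → ℝ) (c α : ℝ) : Prop :=
  0 < c ∧ 0 < α ∧ (∀ y : ℝ, 0 ≤ y → F y = 1) ∧
  Tendsto (fun y => (F y - (1 - c * |y| ^ α)) / |y| ^ α) (nhdsWithin 0 (Set.Iio 0)) (nhds 0)


set_option maxHeartbeats 4000000

/-- **Lemma A.2**: under (F1) and (H1), for any fixed finite collection of disjoint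
non-degenerate subintervals `I_1, …, I_m` of `[−1,1]`,
`sup_{x ∈ [h_n,1−h_n]} max_{1 ≤ j ≤ m} min{−ε_i : (i/n − x)/h_n ∈ I_j} = O_P((|log h_n|/(n h_n))^{1/α})`
(the event that the sup–max–min exceeds the threshold is expressed by the existence of a
window all of whose errors exceed the threshold). -/
theorem block_minima_uniform_rate
    {Ω : Type*} [MeasurableSpace Ω] (μ : Measure Ω) [IsProbabilityMeasure μ]
    (ε : ℕ → Ω → ℝ) (F : ℝ → ℝ) (c α : ℝ)
    -- (F1)
    (hiid : IIDWithCDF μ ε F) (hF1 : ErrF1 F c α)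
    -- (H1)
    (h : ℕ → ℝ) (hpos : ∀ n, 0 < h n)
    (hto0 : Tendsto h atTop (nhds 0))
    (hH1 : Tendsto (fun n : ℕ => (n : ℝ) * h n / |Real.log (h n)|) atTop atTop)
    -- the disjoint non-degenerate subintervals I_j = [l j, u j] ⊆ [−1,1], j = 1,…,m
    (m : ℕ) (l u : ℕ → ℝ)
    (hlu : ∀ j ∈ Finset.Icc 1 m, l j < u j)
    (hsub : ∀ j ∈ Finset.Icc 1 m, Set.Icc (l j) (u j) ⊆ Set.Icc (-1:ℝ) 1)
    (hdisj : ∀ j ∈ Finset.Icc 1 m, ∀ k ∈ Finset.Icc 1 m, j ≠ k →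
        Disjoint (Set.Icc (l j) (u j)) (Set.Icc (l k) (u k))) :
    ∀ e : ℝ, 0 < e → ∃ C : ℝ,
      Filter.limsup (fun n : ℕ =>
          μ {ω | ∃ x ∈ Set.Icc (h n) (1 - h n), ∃ j ∈ Finset.Icc 1 m,
              (∃ i ∈ Finset.Icc 1 n, ((i:ℝ)/n - x)/h n ∈ Set.Icc (l j) (u j)) ∧
              ∀ i ∈ Finset.Icc 1 n, ((i:ℝ)/n - x)/h n ∈ Set.Icc (l j) (u j) →
                C * (|Real.log (h n)| / ((n : ℝ) * h n)) ^ (1/α) < -(ε i ω)}) atTop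
        ≤ ENNReal.ofReal e := by
  intro e he
  obtain ⟨hmeas, hindep, hcdf⟩ := hiid
  obtain ⟨hc, hα, hF0, hFt⟩ := hF1
  rcases Nat.eq_zero_or_pos m with hm | hm
  · refine ⟨0, ?_⟩
    apply Filter.limsup_le_of_le (by isBoundedDefault)
    filter_upwards with n
    refine le_trans (measure_mono ?_) (by simp : μ (∅ : Set Ω) ≤ _)
    rintro ω ⟨x, hx, j, hj, -⟩
    rw [Finset.mem_Icc] at hj
    omega
  -- main case : m ≥ 1
  have hne : (Finset.Icc 1 m).Nonempty := ⟨1, Finset.mem_Icc.mpr ⟨le_refl 1, hm⟩⟩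
  set δ : ℝ := (Finset.Icc 1 m).inf' hne (fun j => u j - l j) with hδdef
  have hδ : 0 < δ := (Finset.lt_inf'_iff hne).mpr (fun j hj => sub_pos.mpr (hlu j hj))
  set C : ℝ := (16 / (c * δ)) ^ (1/α) with hCdef
  have hC : 0 < C := Real.rpow_pos_of_pos (by positivity) _
  have hCα : C ^ α = 16 / (c * δ) := by
    rw [hCdef, ← Real.rpow_mul (by positivity : (0:ℝ) ≤ 16 / (c * δ)), one_div,
      inv_mul_cancel₀ hα.ne', Real.rpow_one]
  refine ⟨C, ?_⟩
  -- the tail estimate from (F1)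
  obtain ⟨η, hη, hηimp⟩ := Metric.tendsto_nhdsWithin_nhds.mp hFt (c/2) (half_pos hc)
  have hFest : ∀ T : ℝ, 0 < T → T < η → F (-T) ≤ 1 - c/2 * T ^ α := by
    intro T hT hTη
    have hmem : (-T) ∈ Set.Iio (0:ℝ) := by simpa using hT
    have hdist : dist (-T) 0 < η := by
      rw [Real.dist_eq, sub_zero, abs_neg, abs_of_pos hT]; exact hTη
    have h1 := hηimp hmem hdist
    rw [Real.dist_eq, sub_zero] at h1
    have habsT : |(-T)| = T := by rw [abs_neg, abs_of_pos hT]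
    rw [habsT] at h1
    have hTα : (0:ℝ) < T ^ α := Real.rpow_pos_of_pos hT α
    rw [abs_div, abs_of_pos hTα, div_lt_iff₀ hTα] at h1
    have h2 := (abs_lt.mp h1).2
    nlinarith
  -- probability of a block of errors all below -T
  have key_prob : ∀ (s : Finset ℕ) (T : ℝ),
      μ {ω | ∀ i ∈ s, T < -(ε i ω)} ≤ ENNReal.ofReal (F (-T)) ^ s.card := by
    intro s T
    have hset : {ω | ∀ i ∈ s, T < -(ε i ω)} = ⋂ i ∈ s, ε i ⁻¹' Set.Iio (-T) := by
      ext ω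
      simp only [Set.mem_setOf_eq, Set.mem_iInter, Set.mem_preimage, Set.mem_Iio, lt_neg]
    rw [hset, hindep.meas_biInter (fun i _ => ⟨Set.Iio (-T), measurableSet_Iio, rfl⟩)]
    calc ∏ i ∈ s, μ (ε i ⁻¹' Set.Iio (-T))
        ≤ ∏ i ∈ s, ENNReal.ofReal (F (-T)) := by
          refine Finset.prod_le_prod' (fun i _ => ?_)
          rw [← hcdf i (-T)]
          exact measure_mono (fun ω hω => show ε i ω ≤ -T from le_of_lt hω)
      _ = ENNReal.ofReal (F (-T)) ^ s.card := Finset.prod_const _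
  -- limits
  have hhne : ∀ᶠ n : ℕ in atTop, h n < 1 := hto0.eventually_lt_const one_pos
  have hlogt : Tendsto (fun n : ℕ => |Real.log (h n)|) atTop atTop := by
    have h1 : Tendsto h atTop (nhdsWithin 0 {(0:ℝ)}ᶜ) := by
      rw [tendsto_nhdsWithin_iff]
      exact ⟨hto0, Filter.Eventually.of_forall (fun n => (hpos n).ne')⟩
    exact tendsto_abs_atBot_atTop.comp (Real.tendsto_log_nhdsNE_zero.comp h1)
  have hnh : Tendsto (fun n : ℕ => (n:ℝ) * h n) atTop atTop := by
    refine (hH1.atTop_mul_atTop₀ hlogt).congr' ?_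
    filter_upwards [hhne] with n h1
    have hlog0 : |Real.log (h n)| ≠ 0 :=
      (abs_pos.mpr (Real.log_neg (hpos n) h1).ne).ne'
    exact div_mul_cancel₀ _ hlog0
  have hr0fun : Tendsto (fun n : ℕ => |Real.log (h n)| / ((n:ℝ) * h n)) atTop (nhds 0) := by
    refine (tendsto_inv_atTop_zero.comp hH1).congr (fun n => ?_)
    simp only [Function.comp_apply, inv_div]
  have hTfun : Tendsto (fun n : ℕ => C * (|Real.log (h n)| / ((n:ℝ) * h n)) ^ (1/α))
      atTop (nhds 0) := by
    have hcont : ContinuousAt (fun x : ℝ => x ^ (1/α)) 0 :=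
      Real.continuousAt_rpow_const 0 (1/α) (Or.inr (by positivity))
    have h2 : Tendsto (fun n : ℕ => (|Real.log (h n)| / ((n:ℝ) * h n)) ^ (1/α))
        atTop (nhds ((0:ℝ) ^ (1/α))) := hcont.tendsto.comp hr0fun
    rw [Real.zero_rpow (by positivity : (1/α : ℝ) ≠ 0)] at h2
    simpa using h2.const_mul C
  -- the main bound for large n
  have main : ∀ n : ℕ, 1 ≤ n → h n < 1 →
      C * (|Real.log (h n)| / ((n:ℝ) * h n)) ^ (1/α) < η → 8 ≤ δ * n * h n →
      μ {ω | ∃ x ∈ Set.Icc (h n) (1 - h n), ∃ j ∈ Finset.Icc 1 m,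
          (∃ i ∈ Finset.Icc 1 n, ((i:ℝ)/n - x)/h n ∈ Set.Icc (l j) (u j)) ∧
          ∀ i ∈ Finset.Icc 1 n, ((i:ℝ)/n - x)/h n ∈ Set.Icc (l j) (u j) →
            C * (|Real.log (h n)| / ((n : ℝ) * h n)) ^ (1/α) < -(ε i ω)}
        ≤ ENNReal.ofReal (4 * h n / δ) := by
    intro n hn1 hn2 hnTη hn8
    have hh : 0 < h n := hpos n
    have hn0 : (0:ℝ) < n := by exact_mod_cast hn1
    have hnh0 : (0:ℝ) < (n:ℝ) * h n := by positivity
    have hlneg : Real.log (h n) < 0 := Real.log_neg hh hn2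
    have hlog0 : 0 < |Real.log (h n)| := abs_pos.mpr hlneg.ne
    have hr0 : 0 ≤ |Real.log (h n)| / ((n:ℝ) * h n) := by positivity
    set T : ℝ := C * (|Real.log (h n)| / ((n:ℝ) * h n)) ^ (1/α) with hTdef
    have hT0 : 0 < T :=
      mul_pos hC (Real.rpow_pos_of_pos (div_pos hlog0 hnh0) _)
    have hTα : T ^ α = 16 / (c * δ) * (|Real.log (h n)| / ((n:ℝ) * h n)) := by
      rw [hTdef, Real.mul_rpow hC.le (Real.rpow_nonneg hr0 _),
        ← Real.rpow_mul hr0, one_div, inv_mul_cancel₀ hα.ne', Real.rpow_one, hCα]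
    set L : ℕ := ⌈δ * n * h n / 4⌉₊ with hLdef
    have hL0 : 0 < L := Nat.ceil_pos.mpr (by linarith)
    have hLpos : (0:ℝ) < (L:ℝ) := by exact_mod_cast hL0
    have hLr : δ * n * h n / 4 ≤ (L:ℝ) := Nat.le_ceil _
    have hLr2 : (L:ℝ) < δ * n * h n / 4 + 1 := Nat.ceil_lt_add_one (by positivity)
    have h2L : 2 * (L:ℝ) + 2 ≤ δ * n * h n := by linarith
    -- covering by blocks
    have cover : {ω | ∃ x ∈ Set.Icc (h n) (1 - h n), ∃ j ∈ Finset.Icc 1 m,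
          (∃ i ∈ Finset.Icc 1 n, ((i:ℝ)/n - x)/h n ∈ Set.Icc (l j) (u j)) ∧
          ∀ i ∈ Finset.Icc 1 n, ((i:ℝ)/n - x)/h n ∈ Set.Icc (l j) (u j) →
            T < -(ε i ω)} ⊆
        ⋃ k ∈ Finset.range (n / L),
          {ω | ∀ i ∈ Finset.Icc (k * L + 1) ((k+1) * L), T < -(ε i ω)} := by
      rintro ω ⟨x, hx, j, hj, -, hall⟩
      obtain ⟨hx1, hx2⟩ := hx
      have hlj : -1 ≤ l j := (hsub j hj ⟨le_refl _, (hlu j hj).le⟩).1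
      have huj : u j ≤ 1 := (hsub j hj ⟨(hlu j hj).le, le_refl _⟩).2
      have hδj : δ ≤ u j - l j := Finset.inf'_le _ hj
      set a : ℝ := n * (x + l j * h n) with ha
      set b : ℝ := n * (x + u j * h n) with hb
      have hinner1 : 0 ≤ x + l j * h n := by
        nlinarith [mul_le_mul_of_nonneg_right hlj hh.le]
      have ha0 : 0 ≤ a := mul_nonneg hn0.le hinner1
      have hinner2 : x + u j * h n ≤ 1 := by
        nlinarith [mul_le_mul_of_nonneg_right huj hh.le]
      have hbn : b ≤ n := by
        rw [hb]
        nlinarith [mul_le_mul_of_nonneg_left hinner2 hn0.le]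
      have hba' : b - a = (n:ℝ) * h n * (u j - l j) := by rw [ha, hb]; ring
      have hba : a + (2 * (L:ℝ) + 2) ≤ b := by
        nlinarith [mul_le_mul_of_nonneg_left hδj hnh0.le]
      set k : ℕ := ⌈a / (L:ℝ)⌉₊ with hk
      have hk1 : a ≤ (k:ℝ) * L := (div_le_iff₀ hLpos).mp (Nat.le_ceil _)
      have hk2 : (k:ℝ) * L ≤ a + L := by
        have h3 : (k:ℝ) < a / L + 1 := Nat.ceil_lt_add_one (div_nonneg ha0 hLpos.le)
        have h4 : a / L * L = a := div_mul_cancel₀ _ hLpos.ne'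
        nlinarith
      have hkn : (((k+1) * L : ℕ) : ℝ) ≤ (n:ℝ) := by push_cast; nlinarith
      have hkmem : k ∈ Finset.range (n / L) := by
        rw [Finset.mem_range, Nat.lt_iff_add_one_le, Nat.le_div_iff_mul_le hL0]
        exact_mod_cast hkn
      refine Set.mem_biUnion hkmem ?_
      intro i hi
      rw [Finset.mem_Icc] at hi
      have hia : a + 1 ≤ (i:ℝ) := by
        have h5 : ((k * L + 1 : ℕ) : ℝ) ≤ (i:ℝ) := by exact_mod_cast hi.1
        push_cast at h5
        linarith
      have hib : (i:ℝ) ≤ b := by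
        have h5 : (i:ℝ) ≤ (((k+1) * L : ℕ) : ℝ) := by exact_mod_cast hi.2
        push_cast at h5
        nlinarith
      have hmono : ∀ y z : ℝ, y ≤ z →
          (y/(n:ℝ) - x)/h n ≤ (z/(n:ℝ) - x)/h n := by
        intro y z hyz
        have hdiff : (z/(n:ℝ) - x)/h n - (y/(n:ℝ) - x)/h n = (z - y)/((n:ℝ) * h n) := by
          field_simp
          ring
        have : 0 ≤ (z - y)/((n:ℝ) * h n) := div_nonneg (by linarith) hnh0.le
        linarith
      have e1 : (a/(n:ℝ) - x)/h n = l j := by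
        rw [ha]; field_simp; ring
      have e2 : (b/(n:ℝ) - x)/h n = u j := by
        rw [hb]; field_simp; ring
      apply hall i
      · rw [Finset.mem_Icc]
        refine ⟨by omega, ?_⟩
        exact_mod_cast hib.trans hbn
      · constructor
        · rw [← e1]; exact hmono a i (by linarith)
        · rw [← e2]; exact hmono i b hib
    -- per-block probability bound
    have hcard : ∀ k : ℕ, (Finset.Icc (k * L + 1) ((k+1) * L)).card = L := by
      intro k
      rw [Nat.card_Icc]
      have hx : (k+1) * L = k * L + L := by ring
      omega
    have blockbound : ∀ k : ℕ,
        μ {ω | ∀ i ∈ Finset.Icc (k * L + 1) ((k+1) * L), T < -(ε i ω)}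
          ≤ ENNReal.ofReal (h n ^ 2) := by
      intro k
      calc μ {ω | ∀ i ∈ Finset.Icc (k * L + 1) ((k+1) * L), T < -(ε i ω)}
          ≤ ENNReal.ofReal (F (-T)) ^ (Finset.Icc (k * L + 1) ((k+1) * L)).card :=
            key_prob _ T
        _ = ENNReal.ofReal (F (-T)) ^ L := by rw [hcard]
        _ ≤ ENNReal.ofReal (Real.exp (-(c/2 * T ^ α))) ^ L := by
            gcongr
            exact le_trans (hFest T hT0 hnTη) (Real.one_sub_le_exp_neg _)
        _ = ENNReal.ofReal (Real.exp ((L:ℝ) * -(c/2 * T ^ α))) := by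
            rw [Real.exp_nat_mul, ENNReal.ofReal_pow (Real.exp_nonneg _)]
        _ ≤ ENNReal.ofReal (Real.exp (-(2 * |Real.log (h n)|))) := by
            apply ENNReal.ofReal_le_ofReal
            apply Real.exp_le_exp.mpr
            rw [hTα]
            have hz : (0:ℝ) ≤ c/2 * (16/(c*δ) * (|Real.log (h n)|/((n:ℝ) * h n))) := by
              positivity
            have hkey : δ * n * h n / 4 *
                (c/2 * (16/(c*δ) * (|Real.log (h n)|/((n:ℝ) * h n))))
                = 2 * |Real.log (h n)| := by
              field_simp
              ring
            nlinarith [mul_le_mul_of_nonneg_right hLr hz]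
        _ = ENNReal.ofReal (h n ^ 2) := by
            congr 1
            rw [abs_of_neg hlneg,
              show -(2 * -Real.log (h n)) = Real.log (h n) + Real.log (h n) by ring,
              Real.exp_add, Real.exp_log hh, sq]
    -- union bound
    calc μ {ω | ∃ x ∈ Set.Icc (h n) (1 - h n), ∃ j ∈ Finset.Icc 1 m,
          (∃ i ∈ Finset.Icc 1 n, ((i:ℝ)/n - x)/h n ∈ Set.Icc (l j) (u j)) ∧
          ∀ i ∈ Finset.Icc 1 n, ((i:ℝ)/n - x)/h n ∈ Set.Icc (l j) (u j) →
            T < -(ε i ω)}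
        ≤ μ (⋃ k ∈ Finset.range (n / L),
            {ω | ∀ i ∈ Finset.Icc (k * L + 1) ((k+1) * L), T < -(ε i ω)}) :=
          measure_mono cover
      _ ≤ ∑ k ∈ Finset.range (n / L),
            μ {ω | ∀ i ∈ Finset.Icc (k * L + 1) ((k+1) * L), T < -(ε i ω)} :=
          measure_biUnion_finset_le _ _
      _ ≤ ∑ k ∈ Finset.range (n / L), ENNReal.ofReal (h n ^ 2) :=
          Finset.sum_le_sum (fun k _ => blockbound k)
      _ = (n / L : ℕ) * ENNReal.ofReal (h n ^ 2) := by
          rw [Finset.sum_const, Finset.card_range, nsmul_eq_mul]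
      _ ≤ ENNReal.ofReal (4 * h n / δ) := by
          rw [← ENNReal.ofReal_natCast (n / L), ← ENNReal.ofReal_mul (by positivity)]
          apply ENNReal.ofReal_le_ofReal
          have hD : (0:ℝ) < δ * n * h n / 4 := by linarith
          have hdm : ((n / L : ℕ) : ℝ) * (δ * n * h n / 4) ≤ (n:ℝ) := by
            have h6 : ((n / L : ℕ) : ℝ) * (L:ℝ) ≤ (n:ℝ) := by
              exact_mod_cast Nat.div_mul_le_self n L
            nlinarith [(Nat.cast_nonneg (n / L) : (0:ℝ) ≤ ((n / L : ℕ) : ℝ)), hLr]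
          have hK : ((n / L : ℕ) : ℝ) ≤ (n:ℝ) / (δ * n * h n / 4) :=
            (le_div_iff₀ hD).mpr hdm
          have hK3 : (n:ℝ) / (δ * n * h n / 4) = 4 / (δ * h n) := by
            field_simp
          have hK5 : 4 / (δ * h n) * h n ^ 2 = 4 * h n / δ := by
            field_simp
          have hK4 : ((n / L : ℕ) : ℝ) * h n ^ 2 ≤ 4 / (δ * h n) * h n ^ 2 :=
            mul_le_mul_of_nonneg_right (by linarith [hK, hK3]) (by positivity)
          linarith
  -- conclude
  have hev : ∀ᶠ n : ℕ in atTop,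
      μ {ω | ∃ x ∈ Set.Icc (h n) (1 - h n), ∃ j ∈ Finset.Icc 1 m,
          (∃ i ∈ Finset.Icc 1 n, ((i:ℝ)/n - x)/h n ∈ Set.Icc (l j) (u j)) ∧
          ∀ i ∈ Finset.Icc 1 n, ((i:ℝ)/n - x)/h n ∈ Set.Icc (l j) (u j) →
            C * (|Real.log (h n)| / ((n : ℝ) * h n)) ^ (1/α) < -(ε i ω)}
        ≤ ENNReal.ofReal e := by
    have ev4 : ∀ᶠ n : ℕ in atTop, 8 ≤ δ * n * h n := by
      filter_upwards [hnh.eventually_ge_atTop (8/δ)] with n hn8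
      rw [mul_assoc]
      exact (div_le_iff₀' hδ).mp hn8
    have ev5 : ∀ᶠ n : ℕ in atTop, 4 * h n / δ ≤ e := by
      have h1 : Tendsto (fun n : ℕ => 4 * h n / δ) atTop (nhds 0) := by
        have h2 := (hto0.const_mul (4:ℝ)).div_const δ
        simpa using h2
      exact h1.eventually_le_const he
    filter_upwards [Filter.eventually_ge_atTop 1, hhne, hTfun.eventually_lt_const hη,
      ev4, ev5] with n h1 h2 h3 h4 h5
    exact (main n h1 h2 h3 h4).trans (ENNReal.ofReal_le_ofReal h5)
  exact Filter.limsup_le_of_le (by isBoundedDefault) hev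

end
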